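/- Let d, n ≥ 1, let ω : ℤ^d × ℤ^d → ℝ be additive in each variable and antisymmetric, and set λ(α, β) := exp(i·ω(α, β)). Let m, m' : ℤ^d → M_n(ℂ) have rapid decay, and define the ℤ^d×ℤ^d-indexed matrices S_{α,β} := λ(α, β)·m(α − β) and T_{α,β} := λ(α, β)·m'(α − β). Then for all α, β ∈ ℤ^d the family (S_{α,γ}·T_{γ,β})_{γ∈ℤ^d} is summable in M_n(ℂ); the function m'' : ℤ^d → M_n(ℂ) defined by m''(δ) := Σ_{γ∈ℤ^d} λ(γ, δ)·m(γ)·m'(δ − γ) has rapid decay; and Σ_{γ∈ℤ^d} S_{α,γ}·T_{γ,β} = λ(α, β)·m''(α − β) for all α, β ∈ ℤ^d. In particular the set of matrices of the form (λ(α,β)·m(α−β))_{α,β} with m of rapid decay is closed under matrix multiplication. -/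

import Mathlib

open scoped Matrix.Norms.L2Operator

lemma magExpNorm (t : ℝ) : ‖Complex.exp (Complex.I * t)‖ = 1 := by
  rw [Complex.norm_exp]; simp

lemma magSum1 : Summable (fun k : ℤ => ((1 + |(k : ℝ)|) ^ 2)⁻¹) := by
  have hnat : Summable (fun n : ℕ => ((1 + (n : ℝ)) ^ 2)⁻¹) := by
    have h := (Real.summable_nat_pow_inv (p := 2)).2 one_lt_two
    have := h.comp_injective (Nat.succ_injective)
    refine this.congr fun n => ?_
    simp [Nat.succ_eq_add_one, add_comm]
  refine Summable.of_nat_of_neg (hnat.congr fun n => by simp) (hnat.congr fun n => by simp)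

lemma magSumPi (d : ℕ) :
    Summable (fun γ : Fin d → ℤ => ∏ i, ((1 + |(γ i : ℝ)|) ^ 2)⁻¹) := by
  induction d with
  | zero => exact .of_finite
  | succ d ih =>
      have h := (magSum1.mul_of_nonneg ih (fun k => by positivity)
        (fun γ => Finset.prod_nonneg fun i _ => by positivity))
      have := h.comp_injective (Fin.consEquiv fun _ : Fin (d + 1) => ℤ).symm.injective
      refine this.congr fun γ => ?_
      simp only [Function.comp]
      rw [Fin.prod_univ_succ]
      simp [Fin.consEquiv, Fin.tail]

lemma magJap (d K : ℕ) (h : 2 * d ≤ K) :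
    Summable (fun γ : Fin d → ℤ => ((1 + ‖γ‖) ^ K)⁻¹) := by
  have base := magSumPi d
  refine base.of_nonneg_of_le (fun γ => by positivity) (fun γ => ?_)
  have h1 : (0:ℝ) ≤ ‖γ‖ := norm_nonneg _
  have h2 : ∀ i, (1 + |(γ i : ℝ)|) ≤ 1 + ‖γ‖ := by
    intro i
    have := norm_le_pi_norm γ i
    simp only [Int.norm_eq_abs] at this
    linarith
  calc ((1 + ‖γ‖) ^ K)⁻¹ ≤ ((1 + ‖γ‖) ^ (2 * d))⁻¹ := by
        apply inv_anti₀ (by positivity)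
        exact pow_le_pow_right₀ (by linarith) h
    _ ≤ ∏ i, ((1 + |(γ i : ℝ)|) ^ 2)⁻¹ := by
        rw [show (1 + ‖γ‖) ^ (2 * d) = ∏ _i : Fin d, (1 + ‖γ‖) ^ 2 by
          rw [Finset.prod_const, ← pow_mul, Finset.card_univ, Fintype.card_fin, mul_comm]]
        rw [← Finset.prod_inv_distrib]
        apply Finset.prod_le_prod (fun i _ => by positivity) (fun i _ => ?_)
        exact inv_anti₀ (by positivity) (by nlinarith [h2 i, abs_nonneg ((γ i : ℝ))])

lemma magPeetre {d : ℕ} (x y : Fin d → ℤ) :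
    1 + ‖x + y‖ ≤ (1 + ‖x‖) * (1 + ‖y‖) := by
  have h := norm_add_le x y
  nlinarith [norm_nonneg x, norm_nonneg y, mul_nonneg (norm_nonneg x) (norm_nonneg y)]

lemma magKey {d : ℕ} (N : ℕ) (γ δ : Fin d → ℤ) {C C' : ℝ} (hC : 0 ≤ C) (hC' : 0 ≤ C') :
    (C / (1 + ‖γ‖) ^ (N + 2 * d)) * (C' / (1 + ‖δ - γ‖) ^ (N + 2 * d)) ≤
      C * C' / (1 + ‖δ‖) ^ N * ((1 + ‖γ‖) ^ (2 * d))⁻¹ := by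
  have hx : (1:ℝ) ≤ 1 + ‖γ‖ := by linarith [norm_nonneg γ]
  have hy : (1:ℝ) ≤ 1 + ‖δ - γ‖ := by linarith [norm_nonneg (δ - γ)]
  have hz : (1:ℝ) ≤ 1 + ‖δ‖ := by linarith [norm_nonneg δ]
  have hp : 1 + ‖δ‖ ≤ (1 + ‖γ‖) * (1 + ‖δ - γ‖) := by
    have := magPeetre γ (δ - γ); rwa [add_sub_cancel] at this
  have key : (1 + ‖δ‖) ^ N * (1 + ‖γ‖) ^ (2 * d) ≤
      (1 + ‖γ‖) ^ (N + 2 * d) * (1 + ‖δ - γ‖) ^ (N + 2 * d) := by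
    calc (1 + ‖δ‖) ^ N * (1 + ‖γ‖) ^ (2 * d)
        ≤ ((1 + ‖γ‖) * (1 + ‖δ - γ‖)) ^ N * (1 + ‖γ‖) ^ (2 * d) := by
          gcongr
      _ = (1 + ‖γ‖) ^ (N + 2*d) * (1 + ‖δ - γ‖) ^ N := by rw [mul_pow, pow_add]; ring
      _ ≤ (1 + ‖γ‖) ^ (N + 2*d) * (1 + ‖δ - γ‖) ^ (N + 2*d) := by
          have hmon : (1 + ‖δ - γ‖) ^ N ≤ (1 + ‖δ - γ‖) ^ (N + 2 * d) :=
            pow_le_pow_right₀ hy (by omega)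
          exact mul_le_mul_of_nonneg_left hmon (by positivity)
  rw [div_mul_div_comm]
  have hR : C * C' / (1 + ‖δ‖) ^ N * ((1 + ‖γ‖) ^ (2 * d))⁻¹
      = C * C' / ((1 + ‖δ‖) ^ N * (1 + ‖γ‖) ^ (2 * d)) := by
    field_simp
  rw [hR]
  exact div_le_div_of_nonneg_left (by positivity) (by positivity) key


/-- `m : ℤ^d → M_n(ℂ)` has rapid decay (w.r.t. the operator norm on matrices). -/
def MagMatRapidDecay (d n : ℕ) (m : (Fin d → ℤ) → Matrix (Fin n) (Fin n) ℂ) : Prop :=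
  ∀ N : ℕ, ∃ C : ℝ, 0 < C ∧ ∀ γ : Fin d → ℤ, ‖m γ‖ ≤ C / (1 + ‖γ‖) ^ N

/-- The magnetic matrices `(α,β) ↦ exp(i ω(α,β)) m(α−β)` with `m` of rapid decay
are closed under matrix multiplication, with an explicit magnetic-twisted
convolution formula for the product. -/
theorem magnetic_matrices_closed_under_mul
    (d n : ℕ) (hd : 1 ≤ d) (hn : 1 ≤ n)
    (ω : (Fin d → ℤ) → (Fin d → ℤ) → ℝ)
    (hω_add_left : ∀ a b c : Fin d → ℤ, ω (a + b) c = ω a c + ω b c)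
    (hω_add_right : ∀ a b c : Fin d → ℤ, ω a (b + c) = ω a b + ω a c)
    (hω_anti : ∀ a b : Fin d → ℤ, ω a b = - ω b a)
    (m m' : (Fin d → ℤ) → Matrix (Fin n) (Fin n) ℂ)
    (hm : MagMatRapidDecay d n m) (hm' : MagMatRapidDecay d n m') :
    (∀ α β : Fin d → ℤ,
      Summable (fun γ : Fin d → ℤ =>
        (Complex.exp (Complex.I * (ω α γ : ℝ)) • m (α - γ)) *
          (Complex.exp (Complex.I * (ω γ β : ℝ)) • m' (γ - β)))) ∧
    MagMatRapidDecay d n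
      (fun δ : Fin d → ℤ =>
        ∑' γ : Fin d → ℤ, Complex.exp (Complex.I * (ω γ δ : ℝ)) • (m γ * m' (δ - γ))) ∧
    (∀ α β : Fin d → ℤ,
      ∑' γ : Fin d → ℤ,
          (Complex.exp (Complex.I * (ω α γ : ℝ)) • m (α - γ)) *
            (Complex.exp (Complex.I * (ω γ β : ℝ)) • m' (γ - β))
        = Complex.exp (Complex.I * (ω α β : ℝ)) •
            (∑' γ : Fin d → ℤ,
              Complex.exp (Complex.I * (ω γ (α - β) : ℝ)) • (m γ * m' (α - β - γ)))) := by
  have hωsubl : ∀ a b c : Fin d → ℤ, ω (a - b) c = ω a c - ω b c := by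
    intro a b c
    have h := hω_add_left (a - b) b c
    rw [sub_add_cancel] at h; linarith
  have hωsubr : ∀ a b c : Fin d → ℤ, ω a (b - c) = ω a b - ω a c := by
    intro a b c
    have h := hω_add_right a (b - c) c
    rw [sub_add_cancel] at h; linarith
  have hωself : ∀ a : Fin d → ℤ, ω a a = 0 := by
    intro a; have := hω_anti a a; linarith
  refine ⟨?_, ?_, ?_⟩
  · -- Part 1: summability
    intro α β
    obtain ⟨C, hC, hmC⟩ := hm (2 * d)
    obtain ⟨C', hC', hm'C⟩ := hm' (2 * d)
    have hsum : Summable (fun γ : Fin d → ℤ => C * (C' * ((1 + ‖γ - β‖) ^ (2 * d))⁻¹)) := by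
      have h0 : Summable (fun δ : Fin d → ℤ => C * (C' * ((1 + ‖δ‖) ^ (2 * d))⁻¹)) :=
        (((magJap d (2 * d) le_rfl).mul_left C').mul_left C)
      exact ((Equiv.subRight β).summable_iff.2 h0)
    apply Summable.of_norm_bounded hsum
    intro γ
    have h1 : ‖Complex.exp (Complex.I * (ω α γ : ℝ)) • m (α - γ)‖ = ‖m (α - γ)‖ := by
      rw [norm_smul, magExpNorm, one_mul]
    have h2 : ‖Complex.exp (Complex.I * (ω γ β : ℝ)) • m' (γ - β)‖ = ‖m' (γ - β)‖ := by
      rw [norm_smul, magExpNorm, one_mul]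
    have hone : (1:ℝ) ≤ (1 + ‖α - γ‖) ^ (2 * d) := one_le_pow₀ (by linarith [norm_nonneg (α - γ)])
    calc ‖(Complex.exp (Complex.I * (ω α γ : ℝ)) • m (α - γ)) *
            (Complex.exp (Complex.I * (ω γ β : ℝ)) • m' (γ - β))‖
        ≤ ‖Complex.exp (Complex.I * (ω α γ : ℝ)) • m (α - γ)‖ *
            ‖Complex.exp (Complex.I * (ω γ β : ℝ)) • m' (γ - β)‖ := norm_mul_le _ _
      _ = ‖m (α - γ)‖ * ‖m' (γ - β)‖ := by rw [h1, h2]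
      _ ≤ (C / (1 + ‖α - γ‖) ^ (2 * d)) * (C' / (1 + ‖γ - β‖) ^ (2 * d)) :=
          mul_le_mul (hmC _) (hm'C _) (norm_nonneg _) (by positivity)
      _ = C * ((1 + ‖α - γ‖) ^ (2 * d))⁻¹ * (C' * ((1 + ‖γ - β‖) ^ (2 * d))⁻¹) := by
          rw [div_eq_mul_inv, div_eq_mul_inv]
      _ ≤ C * 1 * (C' * ((1 + ‖γ - β‖) ^ (2 * d))⁻¹) := by
          gcongr
          exact inv_le_one_of_one_le₀ hone
      _ = C * (C' * ((1 + ‖γ - β‖) ^ (2 * d))⁻¹) := by rw [mul_one]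
  · -- Part 2: rapid decay
    intro N
    obtain ⟨C, hC, hmC⟩ := hm (N + 2 * d)
    obtain ⟨C', hC', hm'C⟩ := hm' (N + 2 * d)
    set S := ∑' γ : Fin d → ℤ, ((1 + ‖γ‖) ^ (2 * d))⁻¹ with hSdef
    have hS0 : 0 ≤ S := tsum_nonneg fun γ => by positivity
    refine ⟨C * C' * S + 1, by positivity, fun δ => ?_⟩
    have hterm : ∀ γ : Fin d → ℤ,
        ‖Complex.exp (Complex.I * (ω γ δ : ℝ)) • (m γ * m' (δ - γ))‖ ≤
          (C / (1 + ‖γ‖) ^ (N + 2 * d)) * (C' / (1 + ‖δ - γ‖) ^ (N + 2 * d)) := by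
      intro γ
      rw [norm_smul, magExpNorm, one_mul]
      calc ‖m γ * m' (δ - γ)‖ ≤ ‖m γ‖ * ‖m' (δ - γ)‖ := norm_mul_le _ _
        _ ≤ _ := mul_le_mul (hmC _) (hm'C _) (norm_nonneg _) (by positivity)
    have hterm2 : ∀ γ : Fin d → ℤ,
        (C / (1 + ‖γ‖) ^ (N + 2 * d)) * (C' / (1 + ‖δ - γ‖) ^ (N + 2 * d)) ≤
          C * C' / (1 + ‖δ‖) ^ N * ((1 + ‖γ‖) ^ (2 * d))⁻¹ :=
      fun γ => magKey N γ δ hC.le hC'.le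
    have hsum2 : Summable (fun γ : Fin d → ℤ =>
        C * C' / (1 + ‖δ‖) ^ N * ((1 + ‖γ‖) ^ (2 * d))⁻¹) :=
      (magJap d (2 * d) le_rfl).mul_left _
    have hsumnorm : Summable (fun γ : Fin d → ℤ =>
        ‖Complex.exp (Complex.I * (ω γ δ : ℝ)) • (m γ * m' (δ - γ))‖) :=
      hsum2.of_nonneg_of_le (fun γ => norm_nonneg _)
        (fun γ => (hterm γ).trans (hterm2 γ))
    calc ‖∑' γ : Fin d → ℤ, Complex.exp (Complex.I * (ω γ δ : ℝ)) • (m γ * m' (δ - γ))‖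
        ≤ ∑' γ : Fin d → ℤ, ‖Complex.exp (Complex.I * (ω γ δ : ℝ)) • (m γ * m' (δ - γ))‖ :=
          norm_tsum_le_tsum_norm hsumnorm
      _ ≤ ∑' γ : Fin d → ℤ, C * C' / (1 + ‖δ‖) ^ N * ((1 + ‖γ‖) ^ (2 * d))⁻¹ :=
          Summable.tsum_le_tsum (fun γ => (hterm γ).trans (hterm2 γ)) hsumnorm hsum2
      _ = C * C' / (1 + ‖δ‖) ^ N * S := by rw [tsum_mul_left]
      _ = C * C' * S / (1 + ‖δ‖) ^ N := by ring
      _ ≤ (C * C' * S + 1) / (1 + ‖δ‖) ^ N := by gcongr; linarith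
  · -- Part 3: formula
    intro α β
    have he : ∀ γ : Fin d → ℤ,
        (Complex.exp (Complex.I * (ω α (α - γ) : ℝ)) • m (α - (α - γ))) *
            (Complex.exp (Complex.I * (ω (α - γ) β : ℝ)) • m' (α - γ - β))
        = Complex.exp (Complex.I * (ω α β : ℝ)) •
            (Complex.exp (Complex.I * (ω γ (α - β) : ℝ)) • (m γ * m' (α - β - γ))) := by
      intro γ
      rw [sub_sub_cancel, sub_right_comm]
      rw [smul_mul_smul_comm, smul_smul, ← Complex.exp_add, ← Complex.exp_add]
      have hph : ω α (α - γ) + ω (α - γ) β = ω α β + ω γ (α - β) := by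
        rw [hωsubr, hωsubl, hωsubr, hωself]
        have := hω_anti γ α
        linarith
      rw [← mul_add, ← mul_add, ← Complex.ofReal_add, ← Complex.ofReal_add, hph]
    calc ∑' γ : Fin d → ℤ,
            (Complex.exp (Complex.I * (ω α γ : ℝ)) • m (α - γ)) *
              (Complex.exp (Complex.I * (ω γ β : ℝ)) • m' (γ - β))
        = ∑' γ : Fin d → ℤ,
            (Complex.exp (Complex.I * (ω α (α - γ) : ℝ)) • m (α - (α - γ))) *
              (Complex.exp (Complex.I * (ω (α - γ) β : ℝ)) • m' (α - γ - β)) :=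
          ((Equiv.subLeft α).tsum_eq (fun γ : Fin d → ℤ =>
            (Complex.exp (Complex.I * (ω α γ : ℝ)) • m (α - γ)) *
              (Complex.exp (Complex.I * (ω γ β : ℝ)) • m' (γ - β)))).symm
      _ = ∑' γ : Fin d → ℤ, Complex.exp (Complex.I * (ω α β : ℝ)) •
            (Complex.exp (Complex.I * (ω γ (α - β) : ℝ)) • (m γ * m' (α - β - γ))) :=
          tsum_congr he
      _ = Complex.exp (Complex.I * (ω α β : ℝ)) •
            (∑' γ : Fin d → ℤ,
              Complex.exp (Complex.I * (ω γ (α - β) : ℝ)) • (m γ * m' (α - β - γ))) :=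
          tsum_const_smul'' _
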